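/- Let γ₁ = ζ^{p^{m-j}J₁} and γ₂ = ζ^{p^{m-j}J₂} (with gcd(J₁,p) = gcd(J₂,p) = 1) be roots of distinct irreducible factors of Φ_{p^j} over F. Then ζ^{p^{m-j-1}J₁} and ζ^{p^{m-j-1}J₂} are roots of distinct irreducible factors of Φ_{p^{j+1}} over F. -/

import Mathlib

/-- If `γ₁ = ζ^(p^(m-j) J₁)` and `γ₂ = ζ^(p^(m-j) J₂)` (with `J₁, J₂` coprime to `p`)
are roots of distinct irreducible factors of `Φ_{p^j}` over `F` (i.e. have distinct
minimal polynomials), then `ζ^(p^(m-j-1) J₁)` and `ζ^(p^(m-j-1) J₂)` are roots of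
distinct irreducible factors of `Φ_{p^(j+1)}` over `F`. -/
theorem lift_distinct_irreducible_factors (p n m j : ℕ) (hp : p.Prime) (hpodd : Odd p)
    (hn : 1 ≤ n) (hj : 1 ≤ j) (hjm : j < m)
    (F K : Type*) [Field F] [Fintype F] [Field K] [Algebra F K]
    (hF : Fintype.card F = 2 ^ n)
    (ζ : K) (hζ : IsPrimitiveRoot ζ (p ^ m))
    (J₁ J₂ : ℕ) (hJ₁ : Nat.Coprime J₁ p) (hJ₂ : Nat.Coprime J₂ p)
    (hdist : minpoly F (ζ ^ (p ^ (m - j) * J₁)) ≠ minpoly F (ζ ^ (p ^ (m - j) * J₂))) :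
    minpoly F (ζ ^ (p ^ (m - j - 1) * J₁)) ≠ minpoly F (ζ ^ (p ^ (m - j - 1) * J₂)) := by
  intro heq
  apply hdist
  have key : ∀ (J : ℕ), ζ ^ (p ^ (m - j) * J) = (ζ ^ (p ^ (m - j - 1) * J)) ^ p := by
    intro J
    rw [← pow_mul]
    congr 1
    have h1 : p ^ (m - j) = p ^ (m - j - 1) * p := by
      rw [← pow_succ]
      congr 1
      omega
    rw [h1]
    ring
  rw [key J₁, key J₂]
  set a := ζ ^ (p ^ (m - j - 1) * J₁) with ha_def
  set b := ζ ^ (p ^ (m - j - 1) * J₂) with hb_def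
  have hpm : p ^ m ≠ 0 := pow_ne_zero m hp.pos.ne'
  have ha : IsIntegral F a := by
    refine ⟨Polynomial.X ^ (p ^ m) - Polynomial.C 1, Polynomial.monic_X_pow_sub_C 1 hpm, ?_⟩
    have : a ^ p ^ m = 1 := by
      rw [ha_def, ← pow_mul, mul_comm, pow_mul, hζ.pow_eq_one, one_pow]
    simp [this]
  haveI : Fact (Irreducible (minpoly F a)) := ⟨minpoly.irreducible ha⟩
  have haev : (Polynomial.aeval a) (minpoly F a) = 0 := minpoly.aeval F a
  have hbev : (Polynomial.aeval b) (minpoly F a) = 0 := heq ▸ minpoly.aeval F b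
  let πa := AdjoinRoot.liftAlgHom (minpoly F a) (Algebra.ofId F K) a haev
  let πb := AdjoinRoot.liftAlgHom (minpoly F a) (Algebra.ofId F K) b hbev
  have inja : Function.Injective πa := πa.toRingHom.injective
  have injb : Function.Injective πb := πb.toRingHom.injective
  calc minpoly F (a ^ p)
      = minpoly F (πa ((AdjoinRoot.root (minpoly F a)) ^ p)) := by
        rw [map_pow]; exact congrArg (fun x => minpoly F (x ^ p)) (AdjoinRoot.liftAlgHom_root _ _ _ _).symm
    _ = minpoly F ((AdjoinRoot.root (minpoly F a)) ^ p) := minpoly.algHom_eq πa inja _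
    _ = minpoly F (πb ((AdjoinRoot.root (minpoly F a)) ^ p)) :=
        (minpoly.algHom_eq πb injb _).symm
    _ = minpoly F (b ^ p) := by rw [map_pow]; exact congrArg (fun x => minpoly F (x ^ p)) (AdjoinRoot.liftAlgHom_root _ _ _ _)
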